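/- If ξ ⊆ E_X is a filter on the idempotent semilattice of S_X (0 ∉ ξ, closed under products, upward closed), then there exists x ∈ X ∪ A* such that for every E(F;v) ∈ ξ, the word v is a prefix of x. -/
import Mathlib


open Function

/-- The one-sided shift map on `ℕ → A`. -/
def shft {A : Type*} (x : ℕ → A) : ℕ → A := fun n => x (n + 1)

/-- Concatenation of a finite word `w` with an infinite word `x`. -/
def wcat {A : Type*} (w : List A) (x : ℕ → A) : ℕ → A :=
  fun n => w.getD n (x (n - w.length))

/-- Partial bijections on `ℕ → A` modelled as relations (sets of pairs (input, output)). -/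
abbrev PB (A : Type*) := Set ((ℕ → A) × (ℕ → A))

/-- Composition on the largest possible domain: `rcomp r s` applies `s` first, then `r`
(i.e. the semigroup product `r · s`). -/
def rcomp {A : Type*} (r s : PB A) : PB A := {p | ∃ y, (p.1, y) ∈ s ∧ (y, p.2) ∈ r}

/-- Inverse of a partial bijection. -/
def rinv {A : Type*} (r : PB A) : PB A := {p | (p.2, p.1) ∈ r}

/-- The identity map on a subset `U`. -/
def idOn {A : Type*} (U : Set (ℕ → A)) : PB A := {p | p.1 ∈ U ∧ p.2 = p.1}

/-- The partial bijection `s_μ : x ↦ μx` on `{x ∈ X : μx ∈ X}`. -/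
def sMap {A : Type*} (X : Set (ℕ → A)) (μ : List A) : PB A :=
  {p | p.1 ∈ X ∧ wcat μ p.1 ∈ X ∧ p.2 = wcat μ p.1}

/-- The cylinder set `C(v) = {vx : x ∈ A^ℕ} ∩ X`. -/
def Cyl {A : Type*} (X : Set (ℕ → A)) (v : List A) : Set (ℕ → A) :=
  {y | y ∈ X ∧ ∃ x, y = wcat v x}

/-- `C(μ,ν) = {νx ∈ X : μx ∈ X}`. -/
def Cmn {A : Type*} (X : Set (ℕ → A)) (μ ν : List A) : Set (ℕ → A) :=
  {y | ∃ x, y = wcat ν x ∧ y ∈ X ∧ wcat μ x ∈ X}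

/-- `C(F;v) = {vx ∈ X : fx ∈ X for all f ∈ F}`. -/
def CFv {A : Type*} (X : Set (ℕ → A)) (F : Finset (List A)) (v : List A) : Set (ℕ → A) :=
  {y | ∃ x, y = wcat v x ∧ y ∈ X ∧ ∀ f ∈ F, wcat f x ∈ X}

/-- The idempotent `E(F;v) = Id_{C(F;v)}`. -/
def Efv {A : Type*} (X : Set (ℕ → A)) (F : Finset (List A)) (v : List A) : PB A :=
  idOn (CFv X F v)

/-- The set `E_X = {E(F;v)} ∪ {0}` of idempotents. -/
def EXset {A : Type*} (X : Set (ℕ → A)) : Set (PB A) :=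
  {r | r = ∅ ∨ ∃ (F : Finset (List A)) (v : List A), r = Efv X F v}

/-- The element `s_α E(F;v) s_β^*` of `I(X)`. -/
def elt {A : Type*} (X : Set (ℕ → A)) (α : List A) (F : Finset (List A)) (v β : List A) :
    PB A :=
  rcomp (rcomp (sMap X α) (Efv X F v)) (rinv (sMap X β))

/-- The inverse semigroup `S_X = {s_α E(F;v) s_β^*} ∪ {0}` (closed form). -/
def SXset {A : Type*} (X : Set (ℕ → A)) : Set (PB A) :=
  {r | r = ∅ ∨ ∃ (α β v : List A) (F : Finset (List A)), r = elt X α F v β}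

/-- `α` and `β` are in lowest terms: they do not both end with the same letter. -/
def LowTerms {A : Type*} (α β : List A) : Prop :=
  ∀ a : A, ¬(α.getLast? = some a ∧ β.getLast? = some a)

/-- A word viewed as an element of the free group on `A`. -/
def wgrp {A : Type*} (w : List A) : FreeGroup A := (w.map FreeGroup.of).prod

/-- Natural partial order on partial bijections: `s ≤ t` iff `t s^* s = s`. -/
def rle {A : Type*} (s t : PB A) : Prop := rcomp t (rcomp (rinv s) s) = s

/-- `P_k(x) = {μ ∈ A^k : μx ∈ X}`. -/
def Pk {A : Type*} (X : Set (ℕ → A)) (k : ℕ) (x : ℕ → A) : Set (List A) :=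
  {μ | μ.length = k ∧ wcat μ x ∈ X}

/-- `l`-past equivalence: `P_r(x) = P_r(y)` for all `r ≤ l`. -/
def pastEq {A : Type*} (X : Set (ℕ → A)) (l : ℕ) (x y : ℕ → A) : Prop :=
  ∀ r ≤ l, Pk X r x = Pk X r y

/-- The relation `x ~_{(k,l)} y`. -/
def klEq {A : Type*} (X : Set (ℕ → A)) (k l : ℕ) (x y : ℕ → A) : Prop :=
  (∀ i < k, x i = y i) ∧ pastEq X l (shft^[k] x) (shft^[k] y)

lemma wcat_lt' {A : Type*} (w : List A) (x : ℕ → A) (i : ℕ) (h : i < w.length) :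
    wcat w x i = w.get ⟨i, h⟩ := by
  simp [wcat, List.getD, List.getElem?_eq_getElem h]

lemma prefix_get' {A : Type*} {u w : List A} (h : u <+: w) (i : ℕ) (hi : i < u.length) :
    u.get ⟨i, hi⟩ = w.get ⟨i, Nat.lt_of_lt_of_le hi h.length_le⟩ := by
  obtain ⟨t, rfl⟩ := h
  simp [List.getElem_append_left hi]

lemma prefix_of_agree'  {A : Type*} {v w : List A} (hlen : v.length ≤ w.length)
    (hag : ∀ i (h : i < v.length), v.get ⟨i, h⟩ = w.get ⟨i, Nat.lt_of_lt_of_le h hlen⟩) :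
    v <+: w := by
  have : w.take v.length = v := by
    apply List.ext_getElem
    · simp [Nat.min_eq_left hlen]
    · intro i h1 h2
      simp only [List.getElem_take]
      exact (hag i h2).symm
  exact this ▸ List.take_prefix _ _

theorem stmt11 {A : Type*} [Fintype A] [TopologicalSpace A] [DiscreteTopology A]
    (X : Set (ℕ → A)) (hXcl : IsClosed X) (hXsh : ∀ x ∈ X, shft x ∈ X)
    (ξ : Set (PB A)) (hsub : ξ ⊆ EXset X) (h0 : (∅ : PB A) ∉ ξ)
    (hmul : ∀ e ∈ ξ, ∀ f ∈ ξ, rcomp e f ∈ ξ)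
    (hup : ∀ e ∈ ξ, ∀ f ∈ EXset X, rcomp e f = e → f ∈ ξ) :
    (∃ x ∈ X, ∀ (F : Finset (List A)) (v : List A), Efv X F v ∈ ξ →
        ∀ (i : ℕ) (h : i < v.length), x i = v.get ⟨i, h⟩) ∨
    (∃ w : List A, ∀ (F : Finset (List A)) (v : List A), Efv X F v ∈ ξ → v <+: w) := by
  classical
  -- the set of words appearing in ξ
  set S : Set (List A) := {v | ∃ F : Finset (List A), Efv X F v ∈ ξ} with hS
  -- each point of a cylinder in ξ agrees with its word
  have hagree : ∀ (F : Finset (List A)) (v : List A) (p : ℕ → A), p ∈ CFv X F v →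
      ∀ (i : ℕ) (h : i < v.length), p i = v.get ⟨i, h⟩ := by
    rintro F v p ⟨z, rfl, -, -⟩ i h
    exact wcat_lt' v z i h
  -- each member of ξ has nonempty cylinder
  have hne : ∀ (F : Finset (List A)) (v : List A), Efv X F v ∈ ξ → (CFv X F v).Nonempty := by
    intro F v hv
    rcases Set.eq_empty_or_nonempty (CFv X F v) with he | he
    · exfalso
      apply h0
      have : Efv X F v = (∅ : PB A) := by
        ext p
        simp [Efv, idOn, he]
      rwa [this] at hv
    · exact he
  -- comparability
  have hcomp : ∀ v ∈ S, ∀ w ∈ S, v <+: w ∨ w <+: v := by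
    rintro v ⟨F, hF⟩ w ⟨G, hG⟩
    have hprod := hmul _ hF _ hG
    have hne2 : (rcomp (Efv X F v) (Efv X G w)).Nonempty := by
      rcases Set.eq_empty_or_nonempty (rcomp (Efv X F v) (Efv X G w)) with he | he
      · exact absurd (he ▸ hprod) h0
      · exact he
    obtain ⟨p, hp⟩ := hne2
    obtain ⟨y, hy1, hy2⟩ := hp
    have hpv : p.1 ∈ CFv X F v := by
      have : y = p.1 := hy1.2
      exact this ▸ hy2.1
    have hpw : p.1 ∈ CFv X G w := hy1.1
    rcases le_total v.length w.length with hl | hl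
    · left
      apply prefix_of_agree' hl
      intro i h
      rw [← hagree F v p.1 hpv i h, ← hagree G w p.1 hpw i (Nat.lt_of_lt_of_le h hl)]
    · right
      apply prefix_of_agree' hl
      intro i h
      rw [← hagree G w p.1 hpw i h, ← hagree F v p.1 hpv i (Nat.lt_of_lt_of_le h hl)]
  by_cases hub : ∀ n : ℕ, ∃ v ∈ S, n < v.length
  · -- unbounded case: construct x ∈ X
    left
    choose g hg1 hg2 using hub
    set x : ℕ → A := fun n => (g n).get ⟨n, hg2 n⟩ with hx
    -- x agrees with every v ∈ S
    have hxag : ∀ v ∈ S, ∀ (i : ℕ) (h : i < v.length), x i = v.get ⟨i, h⟩ := by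
      intro v hv i h
      rcases hcomp v hv (g i) (hg1 i) with hp | hp
      · exact (prefix_get' hp i h).symm
      · exact prefix_get' hp i (hg2 i)
    -- build approximating sequence in X
    have happ : ∀ n : ℕ, ∃ y ∈ X, ∀ i < n, y i = x i := by
      intro n
      obtain ⟨F, hF⟩ := hg1 n
      obtain ⟨p, hp⟩ := hne F (g n) hF
      obtain ⟨z, hz, hpX2, hFf⟩ := hp
      refine ⟨p, hpX2, ?_⟩
      intro i hi
      have hlt : i < (g n).length := lt_trans hi (hg2 n)
      rw [hagree F (g n) p ⟨z, hz, hpX2, hFf⟩ i hlt]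
      exact (hxag (g n) (hg1 n) i hlt).symm
    choose y hy1 hy2 using happ
    have hxX : x ∈ X := by
      have htend : Filter.Tendsto y Filter.atTop (nhds x) := by
        rw [tendsto_pi_nhds]
        intro i
        apply Filter.Tendsto.congr' _ tendsto_const_nhds
        filter_upwards [Filter.eventually_ge_atTop (i + 1)] with n hn
        exact (hy2 n i hn).symm
      exact hXcl.mem_of_tendsto htend (Filter.Eventually.of_forall hy1)
    exact ⟨x, hxX, fun F v hv i h => hxag v ⟨F, hv⟩ i h⟩
  · -- bounded case
    right
    push_neg at hub
    obtain ⟨n, hn⟩ := hub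
    rcases Set.eq_empty_or_nonempty S with hSe | hSne
    · exact ⟨[], fun F v hv => absurd (show v ∈ S from ⟨F, hv⟩) (by rw [hSe]; simp)⟩
    · set T : Set ℕ := List.length '' S with hT
      have hTne : T.Nonempty := hSne.image _
      have hTbdd : BddAbove T := by
        refine ⟨n, ?_⟩
        rintro m ⟨v, hv, rfl⟩
        exact hn v hv
      have hmem := Nat.sSup_mem hTne hTbdd
      obtain ⟨w, hwS, hwl⟩ := hmem
      refine ⟨w, fun F v hv => ?_⟩
      have hvS : v ∈ S := ⟨F, hv⟩
      rcases hcomp v hvS w hwS with hp | hp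
      · exact hp
      · have : v.length ≤ w.length := hwl ▸ le_csSup hTbdd ⟨v, hvS, rfl⟩
        rw [hp.eq_of_length_le this]
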